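/- Let Z₀, Z₁ be finite lists of points z⁰₁,…,z⁰_{m} and z¹₁,…,z¹_{n} in a metric space with distinguished point θ, ordered by increasing distance to θ: |z⁰₁,θ| ≤ ⋯ ≤ |z⁰_m,θ| and |z¹₁,θ| ≤ ⋯ ≤ |z¹_n,θ|, with all m + n + mn distances pairwise distinct. Define the merge path f = (f₀,f₁): {0,…,m+n} → {0,…,m}×{0,…,n} by f(k) = (ν₀,ν₁) iff k = ν₀+ν₁ and some t separates: |z⁰_{ν₀},θ| < t < |z⁰_{ν₀+1},θ| and |z¹_{ν₁},θ| < t < |z¹_{ν₁+1},θ|; set i_k = 0 if f₁(k) > f₁(k-1), else i_k = 1. Given a 'join distance' d(z⁰_i, z¹_j) satisfying min(|z⁰_i,θ|,|z¹_j,θ|) ≤ d(z⁰_i,z¹_j) ≤ max(|z⁰_i,θ|,|z¹_j,θ|), one has for any K with f₀(K) < m or f₁(K) < n: ∑_{i=1}^{m} ∑_{j=1}^{n} log d(z⁰_i,z¹_j) ≤ ∑_{k=1}^{K} ∑_{l=f_{i_k}(k)+1}^{deg_{i_k}} log |θ, z^{i_k}_l|, where deg₀ = m, deg₁ = n. -/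

import Mathlib

/-- Combinatorial reordering inequality along the merge path for two sorted
lists of distances `a` (to `z⁰`) and `b` (to `z¹`) in `(0,1]`, with all values pairwise
distinct, and a matrix `c` of join distances sandwiched between min and max of the
marginals. -/
theorem stmt12 (m n : ℕ) (a b : ℕ → ℝ) (c : ℕ → ℕ → ℝ)
    (ha : ∀ i < m, 0 < a i ∧ a i ≤ 1) (hb : ∀ j < n, 0 < b j ∧ b j ≤ 1)
    (hamono : ∀ i j, i ≤ j → j < m → a i ≤ a j)
    (hbmono : ∀ i j, i ≤ j → j < n → b i ≤ b j)
    (hc : ∀ i < m, ∀ j < n, min (a i) (b j) ≤ c i j ∧ c i j ≤ max (a i) (b j))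
    (hd₁ : ∀ i < m, ∀ i' < m, a i = a i' → i = i')
    (hd₂ : ∀ j < n, ∀ j' < n, b j = b j' → j = j')
    (hd₃ : ∀ i < m, ∀ j < n, a i ≠ b j)
    (hd₄ : ∀ i < m, ∀ i' < m, ∀ j' < n, a i ≠ c i' j')
    (hd₅ : ∀ j < n, ∀ i' < m, ∀ j' < n, b j ≠ c i' j')
    (hd₆ : ∀ i < m, ∀ j < n, ∀ i' < m, ∀ j' < n, c i j = c i' j' → i = i' ∧ j = j')
    (f₀ f₁ : ℕ → ℕ)
    (hf : ∀ k ≤ m + n, f₀ k + f₁ k = k ∧ f₀ k ≤ m ∧ f₁ k ≤ n ∧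
      ∃ T : ℝ, (∀ i < f₀ k, a i < T) ∧ (∀ i, f₀ k ≤ i → i < m → T < a i) ∧
               (∀ j < f₁ k, b j < T) ∧ (∀ j, f₁ k ≤ j → j < n → T < b j))
    (ι : ℕ → ℕ)
    (hι : ∀ k, 1 ≤ k → k ≤ m + n →
      (ι k = 0 ∧ f₁ (k - 1) < f₁ k) ∨ (ι k = 1 ∧ f₁ (k - 1) = f₁ k))
    (K : ℕ) (hK : K ≤ m + n) (hKlt : f₀ K < m ∨ f₁ K < n) :
    ∑ i ∈ Finset.range m, ∑ j ∈ Finset.range n, Real.log (c i j) ≤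
      ∑ k ∈ Finset.Icc 1 K,
        (if ι k = 0 then ∑ l ∈ Finset.Ico (f₀ k) m, Real.log (a l)
         else ∑ l ∈ Finset.Ico (f₁ k) n, Real.log (b l)) := by
  classical
  have hab1 : ∀ p ∈ Finset.range m ×ˢ Finset.range n,
      Real.log (max (a p.1) (b p.2)) ≤ 0 := by
    rintro ⟨i, j⟩ hp
    simp only [Finset.mem_product, Finset.mem_range] at hp
    exact Real.log_nonpos (le_max_of_le_left (ha i hp.1).1.le)
      (max_le (ha i hp.1).2 (hb j hp.2).2)
  have key : ∀ K, K ≤ m + n →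
      (∑ k ∈ Finset.Icc 1 K, (if ι k = 0 then ∑ l ∈ Finset.Ico (f₀ k) m, Real.log (a l)
         else ∑ l ∈ Finset.Ico (f₁ k) n, Real.log (b l)))
      = ∑ p ∈ (Finset.range m ×ˢ Finset.range n).filter
          (fun p => (a p.1 < b p.2 ∧ p.1 < f₀ K) ∨ (b p.2 < a p.1 ∧ p.2 < f₁ K)),
          Real.log (max (a p.1) (b p.2)) := by
    intro K
    induction K with
    | zero =>
      intro _
      have h0 : f₀ 0 = 0 ∧ f₁ 0 = 0 := by have := (hf 0 (Nat.zero_le _)).1; omega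
      simp [h0.1, h0.2]
    | succ K ih =>
      intro hK1
      have hK : K ≤ m + n := by omega
      obtain ⟨hsum, hf0m, hf1n, T, hTa, hTa', hTb, hTb'⟩ := hf K hK
      obtain ⟨hsum', hf0m', hf1n', T', hTa1, hTa1', hTb1, hTb1'⟩ := hf (K+1) hK1
      rw [Finset.sum_Icc_succ_top (by omega : 1 ≤ K + 1), ih hK]
      rcases hι (K+1) (by omega) hK1 with ⟨hι0, hlt⟩ | ⟨hι1, heq⟩
      · -- b-step: f₁ increases
        have hlt' : f₁ K < f₁ (K+1) := by simpa using hlt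
        have hstep : f₀ (K+1) = f₀ K ∧ f₁ (K+1) = f₁ K + 1 := by
          have h1 : f₀ K ≤ f₀ (K+1) := by
            by_contra hcon
            push_neg at hcon
            have hjn : f₁ K < n := by omega
            have h2 : a (f₀ (K+1)) < T := hTa _ hcon
            have h3 : T < b (f₁ K) := hTb' _ le_rfl hjn
            have h4 : b (f₁ K) < T' := hTb1 _ hlt'
            have h5 : T' < a (f₀ (K+1)) := hTa1' _ le_rfl (by omega)
            linarith
          omega
        have hjn : f₁ K < n := by omega
        have crux : ∀ i, i < m → (f₀ K ≤ i ↔ b (f₁ K) < a i) := by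
          intro i him
          constructor
          · intro hi
            have h4 : b (f₁ K) < T' := hTb1 _ (by omega)
            have h5 : T' < a i := hTa1' _ (by omega) him
            linarith
          · intro hba
            by_contra hcon
            push_neg at hcon
            have h2 : a i < T := hTa _ hcon
            have h3 : T < b (f₁ K) := hTb' _ le_rfl hjn
            linarith
        have hset : (Finset.range m ×ˢ Finset.range n).filter
              (fun p => (a p.1 < b p.2 ∧ p.1 < f₀ (K+1)) ∨ (b p.2 < a p.1 ∧ p.2 < f₁ (K+1)))
            = (Finset.range m ×ˢ Finset.range n).filter
              (fun p => (a p.1 < b p.2 ∧ p.1 < f₀ K) ∨ (b p.2 < a p.1 ∧ p.2 < f₁ K))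
              ∪ (Finset.Ico (f₀ K) m).image (fun i => (i, f₁ K)) := by
          ext ⟨i, j⟩
          simp only [Finset.mem_filter, Finset.mem_union, Finset.mem_product, Finset.mem_range,
            Finset.mem_image, Finset.mem_Ico, Prod.mk.injEq, hstep.1, hstep.2]
          constructor
          · rintro ⟨⟨him, hjn'⟩, hcase⟩
            rcases hcase with ⟨hab, hi⟩ | ⟨hba, hj⟩
            · exact Or.inl ⟨⟨him, hjn'⟩, Or.inl ⟨hab, hi⟩⟩
            · rcases Nat.lt_or_ge j (f₁ K) with hj' | hj'
              · exact Or.inl ⟨⟨him, hjn'⟩, Or.inr ⟨hba, hj'⟩⟩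
              · have hj'' : j = f₁ K := by omega
                subst hj''
                exact Or.inr ⟨i, ⟨(crux i him).2 hba, him⟩, rfl, rfl⟩
          · rintro (⟨hmem, hcase⟩ | ⟨i', ⟨hi', him'⟩, rfl, rfl⟩)
            · refine ⟨hmem, ?_⟩
              rcases hcase with ⟨h1, h2⟩ | ⟨h1, h2⟩
              · exact Or.inl ⟨h1, h2⟩
              · exact Or.inr ⟨h1, by omega⟩
            · exact ⟨⟨him', hjn⟩, Or.inr ⟨(crux i' him').1 hi', by omega⟩⟩
        have hdisj : Disjoint
            ((Finset.range m ×ˢ Finset.range n).filter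
              (fun p => (a p.1 < b p.2 ∧ p.1 < f₀ K) ∨ (b p.2 < a p.1 ∧ p.2 < f₁ K)))
            ((Finset.Ico (f₀ K) m).image (fun i => (i, f₁ K))) := by
          rw [Finset.disjoint_right]
          rintro ⟨i, j⟩ hmem2 hmem1
          simp only [Finset.mem_image, Finset.mem_Ico, Prod.mk.injEq] at hmem2
          obtain ⟨i', ⟨hi', him'⟩, rfl, rfl⟩ := hmem2
          simp only [Finset.mem_filter, Finset.mem_product, Finset.mem_range] at hmem1
          rcases hmem1.2 with ⟨h1, h2⟩ | ⟨h1, h2⟩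
          · omega
          · omega
        rw [if_pos hι0, hset, Finset.sum_union hdisj, hstep.1]
        congr 1
        rw [Finset.sum_image (fun x _ y _ h => congrArg Prod.fst h)]
        apply Finset.sum_congr rfl
        intro i hi
        simp only [Finset.mem_Ico] at hi
        rw [max_eq_left ((crux i hi.2).1 hi.1).le]
      · -- a-step: f₀ increases
        have heq' : f₁ K = f₁ (K+1) := by simpa using heq
        have e0 : f₀ (K+1) = f₀ K + 1 := by omega
        have hm : f₀ K < m := by omega
        have crux : ∀ j, j < n → (f₁ K ≤ j ↔ a (f₀ K) < b j) := by
          intro j hjn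
          constructor
          · intro hj
            have h4 : a (f₀ K) < T' := hTa1 _ (by omega)
            have h5 : T' < b j := hTb1' _ (by omega) hjn
            linarith
          · intro hab
            by_contra hcon
            push_neg at hcon
            have h2 : b j < T := hTb _ hcon
            have h3 : T < a (f₀ K) := hTa' _ le_rfl hm
            linarith
        have hset : (Finset.range m ×ˢ Finset.range n).filter
              (fun p => (a p.1 < b p.2 ∧ p.1 < f₀ (K+1)) ∨ (b p.2 < a p.1 ∧ p.2 < f₁ (K+1)))
            = (Finset.range m ×ˢ Finset.range n).filter
              (fun p => (a p.1 < b p.2 ∧ p.1 < f₀ K) ∨ (b p.2 < a p.1 ∧ p.2 < f₁ K))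
              ∪ (Finset.Ico (f₁ K) n).image (fun j => (f₀ K, j)) := by
          ext ⟨i, j⟩
          simp only [Finset.mem_filter, Finset.mem_union, Finset.mem_product, Finset.mem_range,
            Finset.mem_image, Finset.mem_Ico, Prod.mk.injEq, e0, ← heq']
          constructor
          · rintro ⟨⟨him, hjn'⟩, hcase⟩
            rcases hcase with ⟨hab, hi⟩ | ⟨hba, hj⟩
            · rcases Nat.lt_or_ge i (f₀ K) with hi' | hi'
              · exact Or.inl ⟨⟨him, hjn'⟩, Or.inl ⟨hab, hi'⟩⟩
              · have hi'' : i = f₀ K := by omega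
                subst hi''
                exact Or.inr ⟨j, ⟨(crux j hjn').2 hab, hjn'⟩, rfl, rfl⟩
            · exact Or.inl ⟨⟨him, hjn'⟩, Or.inr ⟨hba, hj⟩⟩
          · rintro (⟨hmem, hcase⟩ | ⟨j', ⟨hj', hjn'⟩, rfl, rfl⟩)
            · refine ⟨hmem, ?_⟩
              rcases hcase with ⟨h1, h2⟩ | ⟨h1, h2⟩
              · exact Or.inl ⟨h1, by omega⟩
              · exact Or.inr ⟨h1, h2⟩
            · exact ⟨⟨hm, hjn'⟩, Or.inl ⟨(crux j' hjn').1 hj', by omega⟩⟩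
        have hdisj : Disjoint
            ((Finset.range m ×ˢ Finset.range n).filter
              (fun p => (a p.1 < b p.2 ∧ p.1 < f₀ K) ∨ (b p.2 < a p.1 ∧ p.2 < f₁ K)))
            ((Finset.Ico (f₁ K) n).image (fun j => (f₀ K, j))) := by
          rw [Finset.disjoint_right]
          rintro ⟨i, j⟩ hmem2 hmem1
          simp only [Finset.mem_image, Finset.mem_Ico, Prod.mk.injEq] at hmem2
          obtain ⟨j', ⟨hj', hjn'⟩, rfl, rfl⟩ := hmem2
          simp only [Finset.mem_filter, Finset.mem_product, Finset.mem_range] at hmem1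
          rcases hmem1.2 with ⟨h1, h2⟩ | ⟨h1, h2⟩
          · omega
          · omega
        rw [if_neg (by rw [hι1]; exact one_ne_zero), hset, Finset.sum_union hdisj, ← heq']
        congr 1
        rw [Finset.sum_image (fun x _ y _ h => congrArg Prod.snd h)]
        apply Finset.sum_congr rfl
        intro j hj
        simp only [Finset.mem_Ico] at hj
        rw [max_eq_right ((crux j hj.2).1 hj.1).le]
  -- assemble
  have h1 : (∑ i ∈ Finset.range m, ∑ j ∈ Finset.range n, Real.log (c i j))
      ≤ ∑ p ∈ Finset.range m ×ˢ Finset.range n, Real.log (max (a p.1) (b p.2)) := by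
    rw [show (∑ i ∈ Finset.range m, ∑ j ∈ Finset.range n, Real.log (c i j))
        = ∑ p ∈ Finset.range m ×ˢ Finset.range n, Real.log (c p.1 p.2) from
      (Finset.sum_product (Finset.range m) (Finset.range n) (fun p => Real.log (c p.1 p.2))).symm]
    apply Finset.sum_le_sum
    rintro ⟨i, j⟩ hp
    simp only [Finset.mem_product, Finset.mem_range] at hp
    have hcij := hc i hp.1 j hp.2
    have hcpos : 0 < c i j := lt_of_lt_of_le (lt_min (ha i hp.1).1 (hb j hp.2).1) hcij.1
    exact Real.log_le_log hcpos hcij.2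
  have h2 : (∑ p ∈ Finset.range m ×ˢ Finset.range n, Real.log (max (a p.1) (b p.2)))
      ≤ ∑ p ∈ (Finset.range m ×ˢ Finset.range n).filter
          (fun p => (a p.1 < b p.2 ∧ p.1 < f₀ K) ∨ (b p.2 < a p.1 ∧ p.2 < f₁ K)),
          Real.log (max (a p.1) (b p.2)) := by
    have hsub := Finset.filter_subset
      (fun p : ℕ × ℕ => (a p.1 < b p.2 ∧ p.1 < f₀ K) ∨ (b p.2 < a p.1 ∧ p.2 < f₁ K))
      (Finset.range m ×ˢ Finset.range n)
    have hsd := Finset.sum_sdiff (f := fun p : ℕ × ℕ => Real.log (max (a p.1) (b p.2))) hsub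
    have hnp : (∑ p ∈ (Finset.range m ×ˢ Finset.range n) \
        ((Finset.range m ×ˢ Finset.range n).filter
          (fun p => (a p.1 < b p.2 ∧ p.1 < f₀ K) ∨ (b p.2 < a p.1 ∧ p.2 < f₁ K))),
        Real.log (max (a p.1) (b p.2))) ≤ 0 :=
      Finset.sum_nonpos (fun p hp => hab1 p (Finset.mem_sdiff.mp hp).1)
    linarith
  calc (∑ i ∈ Finset.range m, ∑ j ∈ Finset.range n, Real.log (c i j))
      ≤ _ := h1
    _ ≤ _ := h2
    _ = _ := (key K hK).symm
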